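/- Let M be a simple matroid of rank d ≥ 2 such that χ_{M_F}(2) > 0 for every flat F of M (where M_F is the contraction by F). Then M is a Boolean matroid (the free matroid on d elements). -/

import Mathlib

open scoped Matroid

variable {α : Type*}

/-- The rank of a set in a matroid: the maximum size of an independent subset of the set. -/
noncomputable def Matroid.rkSet (M : Matroid α) (S : Set α) : ℕ :=
  ⨆ I : {I : Set α // M.Indep I ∧ I ⊆ S}, I.1.ncard

/-- The rank of a matroid: the rank of its ground set. -/
noncomputable def Matroid.rank (M : Matroid α) : ℕ := M.rkSet M.E

/-- Deletion of a set from a matroid. -/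
noncomputable def Matroid.del (M : Matroid α) (D : Set α) : Matroid α := M ↾ (M.E \ D)

/-- Contraction of a matroid by a set, defined via duality: `M / C = (M✶ \ C)✶`. -/
noncomputable def Matroid.con (M : Matroid α) (C : Set α) : Matroid α := (M✶.del C)✶

/-- A matroid is loopless if every singleton of the ground set is independent. -/
def Matroid.IsLoopless (M : Matroid α) : Prop := ∀ e ∈ M.E, M.Indep {e}

/-- A matroid is simple if every (at most two-element) subset `{e, f}` of the ground set is
independent. -/
def Matroid.IsSimple (M : Matroid α) : Prop := ∀ e ∈ M.E, ∀ f ∈ M.E, M.Indep {e, f}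

/-- The characteristic polynomial of a matroid, as a function of `t`, given by the
Whitney rank-generating-function formula `χ_M(t) = ∑_{S ⊆ E} (-1)^|S| t^(rk M - rk S)`
(which agrees with the Möbius-function definition for loopless matroids). -/
noncomputable def Matroid.charPoly (M : Matroid α) (t : ℚ) : ℚ :=
  ∑ᶠ (S : Set α) (_ : S ⊆ M.E), (-1 : ℚ) ^ S.ncard * t ^ (M.rank - M.rkSet S)

/-- The beta invariant of a matroid, via Crapo's formula
`β(M) = (-1)^(rk M) ∑_{S ⊆ E} (-1)^|S| rk S`. -/
noncomputable def Matroid.betaInv (M : Matroid α) : ℚ :=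
  (-1 : ℚ) ^ M.rank * ∑ᶠ (S : Set α) (_ : S ⊆ M.E), (-1 : ℚ) ^ S.ncard * (M.rkSet S : ℚ)

/-- The invariant `c_M = -2^(rk M) · χ_M(1/2)`. -/
noncomputable def Matroid.cInv (M : Matroid α) : ℚ :=
  - 2 ^ M.rank * M.charPoly (1/2)

open Set

namespace Matroid

variable {M : Matroid α} {S I J B D C BN : Set α} {e : α}

lemma ncard_le_rkSet (M : Matroid α) (hfin : M.E.Finite) (hI : M.Indep I) (hIS : I ⊆ S) :
    I.ncard ≤ M.rkSet S := by
  have hbdd : BddAbove (Set.range fun I : {I : Set α // M.Indep I ∧ I ⊆ S} => I.1.ncard) := by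
    refine ⟨M.E.ncard, ?_⟩
    rintro n ⟨⟨J, hJ, hJS⟩, rfl⟩
    exact Set.ncard_le_ncard hJ.subset_ground hfin
  exact le_ciSup hbdd ⟨I, hI, hIS⟩

lemma rkSet_le (M : Matroid α) {n : ℕ} (h : ∀ I, M.Indep I → I ⊆ S → I.ncard ≤ n) :
    M.rkSet S ≤ n := by
  have : Nonempty {I : Set α // M.Indep I ∧ I ⊆ S} := ⟨⟨∅, M.empty_indep, empty_subset _⟩⟩
  exact ciSup_le fun I => h I.1 I.2.1 I.2.2

lemma rank_eq_ncard_base (hfin : M.E.Finite) (hB : M.IsBase B) : M.rank = B.ncard := by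
  refine le_antisymm (M.rkSet_le fun I hI _ => ?_)
    (M.ncard_le_rkSet hfin hB.indep hB.subset_ground)
  obtain ⟨B', hB', hIB'⟩ := hI.exists_isBase_superset
  calc I.ncard ≤ B'.ncard := ncard_le_ncard hIB' (hfin.subset hB'.subset_ground)
    _ = B.ncard := hB'.ncard_eq_ncard_of_isBase hB

lemma rkSet_le_rank (hfin : M.E.Finite) (S : Set α) : M.rkSet S ≤ M.rank :=
  M.rkSet_le fun I hI _ => M.ncard_le_rkSet hfin hI hI.subset_ground

lemma rkSet_empty (M : Matroid α) : M.rkSet (∅ : Set α) = 0 :=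
  le_antisymm (M.rkSet_le fun I _ hI => by simp [subset_empty_iff.1 hI]) (Nat.zero_le _)

lemma not_mem_closure_empty (h1 : M.Indep {e}) : e ∉ M.closure ∅ := by
  intro he
  rcases (M.empty_indep.mem_closure_iff).1 he with h | h
  · rw [insert_empty_eq] at h
    exact h.not_indep h1
  · exact h

lemma ncard_le_one_of_subset_closure_singleton (hfin : M.E.Finite) (hJ : M.Indep J)
    (hsub : J ⊆ M.closure {e}) : J.ncard ≤ 1 := by
  by_contra h
  push_neg at h
  have hJfin : J.Finite := hfin.subset hJ.subset_ground
  obtain ⟨y, z, hy, hz, hyz⟩ := (Set.one_lt_ncard_iff hJfin).1 h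
  have hzi : M.Indep {z} := hJ.subset (by simpa using hz)
  have hznl : z ∉ M.closure ∅ := not_mem_closure_empty hzi
  have hexch : e ∈ M.closure (insert z ∅) \ M.closure ∅ := by
    refine Matroid.closure_exchange ⟨?_, hznl⟩
    simpa using hsub hz
  have hecl : e ∈ M.closure {z} := by simpa using hexch.1
  have hycl : y ∈ M.closure {z} :=
    M.closure_subset_closure_of_subset_closure (by simpa using hecl) (hsub hy)
  have : M.Dep (insert y {z}) := (hzi.mem_closure_iff_of_notMem (by simpa using hyz)).1 hycl
  exact this.not_indep (hJ.subset (insert_subset hy (by simpa using hz)))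

lemma flat_closure' (M : Matroid α) (X : Set α) : M.IsFlat (M.closure X) := by
  rw [closure_def]
  have hne : Nonempty {F : Set α // M.IsFlat F ∧ X ∩ M.E ⊆ F} :=
    ⟨⟨M.E, M.ground_isFlat, inter_subset_right⟩⟩
  have h := IsFlat.iInter (M := M)
    (Fs := fun F : {F : Set α // M.IsFlat F ∧ X ∩ M.E ⊆ F} => F.1) (fun F => F.2.1)
  convert h using 1
  rw [sInter_eq_iInter]
  rfl

lemma con_ground (M : Matroid α) (C : Set α) : (M.con C).E = M.E \ C := rfl

lemma con_base_of_base (hD : M.IsBasis D C) (hBN : BN ⊆ M.E \ C) (hbase : M.IsBase (D ∪ BN)) :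
    (M.con C).IsBase BN := by
  have hDC : D ⊆ C := hD.subset
  have hCE : C ⊆ M.E := hD.subset_ground
  have hint : (D ∪ BN) ∩ C = D := by
    apply subset_antisymm
    · rintro y ⟨hy1 | hy1, hy2⟩
      · exact hy1
      · exact absurd hy2 (hBN hy1).2
    · exact subset_inter subset_union_left hDC
  have h2 := hbase.compl_inter_isBasis_of_inter_isBasis (by rwa [hint])
  have hset : (M.E \ (D ∪ BN)) ∩ (M.E \ C) = (M.E \ C) \ BN := by
    ext y
    constructor
    · rintro ⟨⟨hyE, hyDBN⟩, -, hyC⟩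
      exact ⟨⟨hyE, hyC⟩, fun hyBN => hyDBN (Or.inr hyBN)⟩
    · rintro ⟨⟨hyE, hyC⟩, hyBN⟩
      exact ⟨⟨hyE, fun h => h.elim (fun h' => hyC (hDC h')) hyBN⟩, hyE, hyC⟩
  rw [hset] at h2
  rw [Matroid.con, Matroid.del, dual_isBase_iff']
  refine ⟨?_, ?_⟩
  · rw [show (M✶ ↾ (M✶.E \ C)).E = M.E \ C from rfl]
    rw [isBase_restrict_iff (diff_subset)]
    exact h2
  · exact hBN

lemma charPoly_eq_sum (M : Matroid α) (hfin : M.E.Finite) (q : ℚ) :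
    M.charPoly q = ∑ t ∈ hfin.toFinset.powerset,
      (-1 : ℚ) ^ t.card * q ^ (M.rank - M.rkSet ↑t) := by
  classical
  set f : Set α → ℚ := fun S => (-1 : ℚ) ^ S.ncard * q ^ (M.rank - M.rkSet S) with hf
  have h1 : M.charPoly q = ∑ᶠ (S : Set α), (if S ⊆ M.E then f S else 0) := by
    rw [Matroid.charPoly]
    exact finsum_congr fun S => finsum_eq_if
  rw [h1, finsum_eq_finset_sum_of_support_subset _
    (s := hfin.toFinset.powerset.image (fun t : Finset α => (t : Set α)))]
  · rw [Finset.sum_image (fun x _ y _ h => Finset.coe_injective h)]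
    refine Finset.sum_congr rfl fun t ht => ?_
    have htE : (↑t : Set α) ⊆ M.E := by
      exact fun y hy => (hfin.mem_toFinset).1 (Finset.mem_powerset.1 ht hy)
    rw [if_pos htE, hf]
    simp [Set.ncard_coe_finset]
  · intro S hS
    have hSE : S ⊆ M.E := by
      by_contra hSE
      simp [hSE] at hS
    have hSfin : S.Finite := hfin.subset hSE
    simp only [Finset.coe_image, Set.mem_image, Finset.mem_coe, Finset.mem_powerset]
    refine ⟨hSfin.toFinset, ?_, hSfin.coe_toFinset⟩
    rw [Finset.subset_iff]
    intro y hy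
    exact hfin.mem_toFinset.2 (hSE (hSfin.mem_toFinset.1 hy))

lemma charPoly_two_nonpos (N : Matroid α) (hfin : N.E.Finite)
    (hl : ∀ e ∈ N.E, N.Indep {e}) (hrk : N.rank = 2)
    {a b x : α} (ha : a ∈ N.E) (hb : b ∈ N.E) (hx : x ∈ N.E)
    (hab : N.closure {a} ≠ N.closure {b})
    (hax : N.closure {a} ≠ N.closure {x})
    (hbx : N.closure {b} ≠ N.closure {x}) :
    N.charPoly 2 ≤ 0 := by
  classical
  set Efin := hfin.toFinset with hEfin
  set P := Efin.powerset with hP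
  have hsubE : ∀ t ∈ P, (↑t : Set α) ⊆ N.E := by
    intro t ht y hy
    exact hfin.mem_toFinset.1 (Finset.mem_powerset.1 ht hy)
  have hge1 : ∀ (t : Finset α), t ≠ ∅ → (↑t : Set α) ⊆ N.E → 1 ≤ N.rkSet ↑t := by
    intro t hne hsub
    obtain ⟨z, hz⟩ := Finset.nonempty_of_ne_empty hne
    have h1 : ({z} : Set α).ncard ≤ N.rkSet ↑t :=
      N.ncard_le_rkSet hfin (hl z (hsub hz)) (by simpa using hz)
    simpa using h1
  have hle2 : ∀ (t : Finset α), N.rkSet ↑t ≤ 2 := fun t => hrk ▸ N.rkSet_le_rank hfin ↑t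
  have hkey : ∀ (t : Finset α), (↑t : Set α) ⊆ N.E → N.rkSet ↑t = 1 → ∀ z ∈ t,
      N.closure ↑t = N.closure {z} := by
    intro t htE hr1 z hz
    have hsub1 : (↑t : Set α) ⊆ N.closure {z} := by
      intro y hy
      by_contra hy'
      have hyz : y ≠ z := by
        rintro rfl
        exact hy' (N.mem_closure_self y (htE hy))
      have hzi := hl z (htE hz)
      have hins : N.Indep (insert y {z}) := by
        rw [hzi.insert_indep_iff_of_notMem (by simpa using hyz)]
        exact ⟨htE hy, hy'⟩
      have h2le : 2 ≤ N.rkSet ↑t := by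
        have h := N.ncard_le_rkSet hfin hins (by
          rw [insert_subset_iff]
          exact ⟨hy, by simpa using hz⟩)
        rwa [Set.ncard_insert_of_notMem (by simpa using hyz) (finite_singleton z),
          Set.ncard_singleton] at h
      omega
    exact subset_antisymm (N.closure_subset_closure_of_subset_closure hsub1)
      (N.closure_subset_closure (by simpa using hz))
  have hEne : Efin.Nonempty := ⟨a, hfin.mem_toFinset.2 ha⟩
  have hchar := N.charPoly_eq_sum hfin 2
  rw [hrk] at hchar
  set ψ : Finset α → ℚ := fun t =>
    if t = ∅ then 3 else if N.rkSet ↑t = 1 then (-1 : ℚ) ^ t.card else 0 with hψ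
  have hterm : ∀ t ∈ P, (-1 : ℚ) ^ t.card * 2 ^ (2 - N.rkSet ↑t)
      = (-1 : ℚ) ^ t.card + ψ t := by
    intro t ht
    by_cases h0 : t = ∅
    · subst h0
      simp [hψ, Matroid.rkSet_empty]
      norm_num
    · have h1 := hge1 t h0 (hsubE t ht)
      have h2 := hle2 t
      by_cases hr1 : N.rkSet ↑t = 1
      · rw [hr1]
        simp only [hψ, if_neg h0, if_pos hr1]
        ring
      · have hr2 : N.rkSet ↑t = 2 := by omega
        rw [hr2]
        simp [hψ, h0, hr1]
  rw [Finset.sum_congr rfl hterm, Finset.sum_add_distrib] at hchar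
  have hsum0 : ∑ t ∈ P, (-1 : ℚ) ^ t.card = 0 := by
    have h := Finset.sum_powerset_neg_one_pow_card_of_nonempty hEne
    have h' : ((∑ t ∈ P, (-1 : ℤ) ^ t.card : ℤ) : ℚ) = 0 := by rw [hP, h]; norm_num
    push_cast at h'
    exact h'
  set T := (P.erase ∅).filter (fun t : Finset α => N.rkSet ↑t = 1) with hT
  have hψsum : ∑ t ∈ P, ψ t = 3 + ∑ t ∈ T, (-1 : ℚ) ^ t.card := by
    have h0P : (∅ : Finset α) ∈ P := Finset.empty_mem_powerset _
    rw [← Finset.add_sum_erase _ ψ h0P, hT, Finset.sum_filter]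
    have hψ0 : ψ ∅ = 3 := by simp [hψ]
    rw [hψ0]
    congr 1
    refine Finset.sum_congr rfl fun t ht => ?_
    have htne : t ≠ ∅ := (Finset.mem_erase.1 ht).1
    simp [hψ, htne]
  set Flats1 := Efin.image (fun e => N.closure {e}) with hFlats1
  have hmaps : ∀ t ∈ T, N.closure ↑t ∈ Flats1 := by
    intro t ht
    rw [hT, Finset.mem_filter] at ht
    obtain ⟨ht1, hr1⟩ := ht
    have htne := (Finset.mem_erase.1 ht1).1
    have htP := (Finset.mem_erase.1 ht1).2
    obtain ⟨z, hz⟩ := Finset.nonempty_of_ne_empty htne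
    rw [hkey t (hsubE t htP) hr1 z hz]
    exact Finset.mem_image_of_mem _ (hfin.mem_toFinset.2 (hsubE t htP hz))
  have hfiber : ∀ L ∈ Flats1,
      ∑ t ∈ T.filter (fun t : Finset α => N.closure ↑t = L), (-1 : ℚ) ^ t.card = -1 := by
    intro L hL
    obtain ⟨e, heE, rfl⟩ := Finset.mem_image.1 hL
    have heE' : e ∈ N.E := hfin.mem_toFinset.1 heE
    have hLE : N.closure {e} ⊆ N.E := N.closure_subset_ground _
    have hLfin : (N.closure {e}).Finite := hfin.subset hLE
    have heL : e ∈ N.closure {e} := N.mem_closure_self e heE'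
    have hfib : T.filter (fun t : Finset α => N.closure ↑t = N.closure {e})
        = hLfin.toFinset.powerset.erase ∅ := by
      ext t
      simp only [hT, Finset.mem_filter, Finset.mem_erase, Finset.mem_powerset]
      constructor
      · rintro ⟨⟨⟨htne, htP⟩, hr1⟩, hcl⟩
        refine ⟨htne, fun y hy => ?_⟩
        rw [hLfin.mem_toFinset]
        rw [← hcl]
        exact N.subset_closure _ (hsubE t htP) hy
      · rintro ⟨htne, hsubL⟩
        have htL : (↑t : Set α) ⊆ N.closure {e} := fun y hy =>
          hLfin.mem_toFinset.1 (hsubL hy)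
        have htE : (↑t : Set α) ⊆ N.E := htL.trans hLE
        have htP : t ∈ P := by
          rw [hP, Finset.mem_powerset]
          intro y hy
          exact hfin.mem_toFinset.2 (htE hy)
        have hr1 : N.rkSet ↑t = 1 := by
          refine le_antisymm (N.rkSet_le fun I hI hIt => ?_) (hge1 t htne htE)
          exact N.ncard_le_one_of_subset_closure_singleton hfin hI (hIt.trans htL)
        refine ⟨⟨⟨htne, htP⟩, hr1⟩, ?_⟩
        obtain ⟨z, hz⟩ := Finset.nonempty_of_ne_empty htne
        rw [hkey t htE hr1 z hz]
        have hzE : z ∈ N.E := htE hz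
        have hzL : z ∈ N.closure {e} := htL hz
        apply subset_antisymm
        · exact N.closure_subset_closure_of_subset_closure (by simpa using hzL)
        · intro y hy
          by_contra hy'
          have hyz : y ≠ z := by
            rintro rfl
            exact hy' (N.mem_closure_self y hzE)
          have hzi := hl z hzE
          have hins : N.Indep (insert y {z}) := by
            rw [hzi.insert_indep_iff_of_notMem (by simpa using hyz)]
            exact ⟨N.closure_subset_ground _ hy, hy'⟩
          have hle1 := N.ncard_le_one_of_subset_closure_singleton (e := e) hfin hins
            (insert_subset hy (by simpa using hzL))
          rw [Set.ncard_insert_of_notMem (by simpa using hyz) (finite_singleton z),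
            Set.ncard_singleton] at hle1
          omega
    rw [hfib]
    have hLne : hLfin.toFinset.Nonempty := ⟨e, hLfin.mem_toFinset.2 heL⟩
    have h0 : ∑ t ∈ hLfin.toFinset.powerset, (-1 : ℚ) ^ t.card = 0 := by
      have h := Finset.sum_powerset_neg_one_pow_card_of_nonempty hLne
      have h' : ((∑ t ∈ hLfin.toFinset.powerset, (-1 : ℤ) ^ t.card : ℤ) : ℚ) = 0 := by
        rw [h]; norm_num
      push_cast at h'
      exact h'
    have herase := Finset.sum_erase_add hLfin.toFinset.powerset
      (fun t => (-1 : ℚ) ^ t.card) (Finset.empty_mem_powerset _)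
    simp only [Finset.card_empty, pow_zero] at herase
    rw [h0] at herase
    linarith
  have hA : ∑ t ∈ T, (-1 : ℚ) ^ t.card = -(Flats1.card : ℚ) := by
    rw [← Finset.sum_fiberwise_of_maps_to hmaps]
    rw [Finset.sum_congr rfl hfiber]
    simp
  have hcard : 3 ≤ Flats1.card := by
    have hsub3 : ({N.closure {a}, N.closure {b}, N.closure {x}} : Finset (Set α)) ⊆ Flats1 := by
      intro L hL
      simp only [Finset.mem_insert, Finset.mem_singleton] at hL
      rcases hL with rfl | rfl | rfl
      · exact Finset.mem_image_of_mem _ (hfin.mem_toFinset.2 ha)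
      · exact Finset.mem_image_of_mem _ (hfin.mem_toFinset.2 hb)
      · exact Finset.mem_image_of_mem _ (hfin.mem_toFinset.2 hx)
    have h3 : ({N.closure {a}, N.closure {b}, N.closure {x}} : Finset (Set α)).card = 3 := by
      rw [Finset.card_insert_of_notMem (by simp [hab, hax]),
        Finset.card_insert_of_notMem (by simp [hbx]), Finset.card_singleton]
    calc 3 = _ := h3.symm
      _ ≤ Flats1.card := Finset.card_le_card hsub3
  rw [hchar, hsum0, hψsum, hA]
  have h3Q : (3 : ℚ) ≤ (Flats1.card : ℚ) := by exact_mod_cast hcard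
  linarith

end Matroid

/-- A simple matroid of rank at least 2 all of whose contractions by flats have positive
characteristic polynomial value at 2 is the Boolean (free) matroid on its ground set. -/
theorem boolean_of_positive_euler_obstruction (M : Matroid α) (hfin : M.E.Finite)
    (hs : M.IsSimple) (hd : 2 ≤ M.rank)
    (hpos : ∀ F : Set α, M.IsFlat F → 0 < (M.con F).charPoly 2) :
    M = Matroid.freeOn M.E := by
  classical
  rw [← Matroid.ground_indep_iff_eq_freeOn]
  by_contra hEdep
  obtain ⟨B, hB⟩ := M.exists_isBase
  have hBE : B ⊆ M.E := hB.subset_ground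
  have hBfin : B.Finite := hfin.subset hBE
  have hBcard : 2 ≤ B.ncard := by
    rw [← Matroid.rank_eq_ncard_base hfin hB]; exact hd
  obtain ⟨x, hxE, hxB⟩ : ∃ x, x ∈ M.E ∧ x ∉ B := by
    by_contra h
    push_neg at h
    have hEB : M.E = B := subset_antisymm h hBE
    exact hEdep (by rw [hEB]; exact hB.indep)
  have hxx : M.Indep {x} := by
    have := hs x hxE x hxE
    rwa [Set.pair_eq_singleton] at this
  set G := {c ∈ B | x ∉ M.closure (B \ {c})} with hG
  have hGsub : G ⊆ B := Set.sep_subset _ _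
  have hnontriv : G.Nontrivial := by
    rw [← Set.not_subsingleton_iff]
    intro hss
    rcases hss.eq_empty_or_singleton with hGe | ⟨b₀, hGb₀⟩
    · have hall : ∀ c ∈ B, x ∈ M.closure (B \ {c}) := by
        intro c hcB
        by_contra hc
        have hmem : c ∈ G := ⟨hcB, hc⟩
        rw [hGe] at hmem
        exact absurd hmem (Set.notMem_empty c)
      have hBne : B.Nonempty := Set.nonempty_of_ncard_ne_zero (by omega)
      have hicl := Matroid.closure_biInter_eq_biInter_closure_of_biUnion_indep
        (A := B) (I := fun c => B \ {c}) hBne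
        (hB.indep.subset (Set.iUnion₂_subset fun i _ => Set.diff_subset))
      have hxint : x ∈ ⋂ c ∈ B, M.closure (B \ {c}) :=
        Set.mem_iInter₂.2 hall
      rw [← hicl] at hxint
      have hempty : (⋂ c ∈ B, (B \ {c})) = (∅ : Set α) := by
        ext y
        simp only [Set.mem_iInter, Set.mem_diff, Set.mem_singleton_iff,
          Set.mem_empty_iff_false, iff_false, not_forall]
        by_cases hyB : y ∈ B
        · exact ⟨y, hyB, fun h => h.2 rfl⟩
        · obtain ⟨c, hcB⟩ := hBne
          exact ⟨c, hcB, fun h => hyB h.1⟩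
      rw [hempty] at hxint
      exact Matroid.not_mem_closure_empty hxx hxint
    · have hb₀G : b₀ ∈ G := by rw [hGb₀]; exact rfl
      have hb₀B : b₀ ∈ B := hGsub hb₀G
      have hall : ∀ c ∈ B, c ≠ b₀ → x ∈ M.closure (B \ {c}) := by
        intro c hcB hne'
        by_contra hc
        have hmem : c ∈ G := ⟨hcB, hc⟩
        rw [hGb₀] at hmem
        exact hne' hmem
      have hB'ne : (B \ {b₀}).Nonempty := Set.nonempty_of_ncard_ne_zero (by
        rw [Set.ncard_diff_singleton_of_mem hb₀B]; omega)
      have hicl := Matroid.closure_biInter_eq_biInter_closure_of_biUnion_indep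
        (A := B \ {b₀}) (I := fun c => B \ {c}) hB'ne
        (hB.indep.subset (Set.iUnion₂_subset fun i _ => Set.diff_subset))
      have hxint : x ∈ ⋂ c ∈ B \ {b₀}, M.closure (B \ {c}) :=
        Set.mem_iInter₂.2 fun c hc => hall c hc.1 hc.2
      rw [← hicl] at hxint
      have hset : (⋂ c ∈ B \ {b₀}, (B \ {c})) = {b₀} := by
        ext y
        simp only [Set.mem_iInter, Set.mem_diff, Set.mem_singleton_iff]
        constructor
        · intro hy
          obtain ⟨c, hc⟩ := hB'ne
          by_contra hyb₀
          have h1 := hy c hc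
          exact (hy y ⟨h1.1, hyb₀⟩).2 rfl
        · rintro rfl
          intro c hc
          exact ⟨hb₀B, fun h => hc.2 h.symm⟩
      rw [hset] at hxint
      have hxb₀ : x ≠ b₀ := fun h => hxB (h ▸ hb₀B)
      have hb₀i : M.Indep {b₀} := by
        have := hs b₀ (hBE hb₀B) b₀ (hBE hb₀B)
        rwa [Set.pair_eq_singleton] at this
      have hdep := (hb₀i.mem_closure_iff_of_notMem (by simpa using hxb₀)).1 hxint
      exact hdep.not_indep (hs x hxE b₀ (hBE hb₀B))
  obtain ⟨a, haG, b, hbG, hne⟩ := hnontriv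
  have haB : a ∈ B := haG.1
  have hbB : b ∈ B := hbG.1
  have hxa : x ∉ M.closure (B \ {a}) := haG.2
  have hxb : x ∉ M.closure (B \ {b}) := hbG.2
  set D := B \ {a, b} with hD
  have hDind : M.Indep D := hB.indep.subset Set.diff_subset
  set F := M.closure D with hF
  have hDF : M.IsBasis D F := hDind.isBasis_closure
  have hFflat : M.IsFlat F := M.flat_closure' D
  have hDa : D ⊆ B \ {a} := Set.diff_subset_diff_right (by simp)
  have hDb : D ⊆ B \ {b} := Set.diff_subset_diff_right (by simp)
  have haF : a ∉ F := fun h =>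
    hB.indep.notMem_closure_sdiff_of_mem haB (M.closure_subset_closure hDa h)
  have hbF : b ∉ F := fun h =>
    hB.indep.notMem_closure_sdiff_of_mem hbB (M.closure_subset_closure hDb h)
  have hxF : x ∉ F := fun h => hxa (M.closure_subset_closure hDa h)
  set N := M.con F with hN
  have hNE : N.E = M.E \ F := M.con_ground F
  have hNfin : N.E.Finite := by
    rw [hNE]; exact hfin.subset Set.diff_subset
  -- bases of N
  have hDunab : D ∪ {a, b} = B := by
    rw [hD, Set.diff_union_of_subset]
    rw [Set.insert_subset_iff, Set.singleton_subset_iff]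
    exact ⟨haB, hbB⟩
  have habN : ({a, b} : Set α) ⊆ M.E \ F :=
    Set.insert_subset ⟨hBE haB, haF⟩ (Set.singleton_subset_iff.2 ⟨hBE hbB, hbF⟩)
  have hNab : N.IsBase {a, b} := M.con_base_of_base hDF habN (by rw [hDunab]; exact hB)
  have hbase_gen : ∀ c ∈ B, x ∉ M.closure (B \ {c}) → M.IsBase ((B \ {c}) ∪ {x}) := by
    intro c hcB hxc
    have hind : M.Indep ((B \ {c}) ∪ {x}) := by
      rw [Set.union_singleton,
        (hB.indep.subset Set.diff_subset).insert_indep_iff_of_notMem (fun h => hxB h.1)]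
      exact ⟨hxE, hxc⟩
    obtain ⟨B₃, hB₃, hsub₃⟩ := hind.exists_isBase_superset
    have hcard : B₃.ncard ≤ ((B \ {c}) ∪ {x}).ncard := by
      have h1 : ((B \ {c}) ∪ {x}).ncard = B.ncard := by
        rw [Set.union_singleton, Set.ncard_insert_of_notMem (fun h => hxB h.1)
          (hBfin.subset Set.diff_subset), Set.ncard_diff_singleton_of_mem hcB]
        omega
      rw [h1, hB₃.ncard_eq_ncard_of_isBase hB]
    have heq := Set.eq_of_subset_of_ncard_le hsub₃ hcard
      (hfin.subset hB₃.subset_ground)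
    rwa [← heq] at hB₃
  have hbase_ax := hbase_gen b hbB hxb
  have hbase_bx := hbase_gen a haB hxa
  have hDax : D ∪ {a, x} = (B \ {b}) ∪ {x} := by
    ext y
    simp only [hD, Set.mem_union, Set.mem_diff, Set.mem_insert_iff, Set.mem_singleton_iff]
    constructor
    · rintro (⟨hyB, hy2⟩ | rfl | rfl)
      · exact Or.inl ⟨hyB, fun h => hy2 (Or.inr h)⟩
      · exact Or.inl ⟨haB, hne⟩
      · exact Or.inr rfl
    · rintro (⟨hyB, hyb⟩ | rfl)
      · by_cases hya : y = a
        · exact Or.inr (Or.inl hya)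
        · exact Or.inl ⟨hyB, fun h => h.elim hya hyb⟩
      · exact Or.inr (Or.inr rfl)
  have hDbx : D ∪ {b, x} = (B \ {a}) ∪ {x} := by
    ext y
    simp only [hD, Set.mem_union, Set.mem_diff, Set.mem_insert_iff, Set.mem_singleton_iff]
    constructor
    · rintro (⟨hyB, hy2⟩ | rfl | rfl)
      · exact Or.inl ⟨hyB, fun h => hy2 (Or.inl h)⟩
      · exact Or.inl ⟨hbB, Ne.symm hne⟩
      · exact Or.inr rfl
    · rintro (⟨hyB, hya⟩ | rfl)
      · by_cases hyb' : y = b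
        · exact Or.inr (Or.inl hyb')
        · exact Or.inl ⟨hyB, fun h => h.elim hya hyb'⟩
      · exact Or.inr (Or.inr rfl)
  have haxN : ({a, x} : Set α) ⊆ M.E \ F :=
    Set.insert_subset ⟨hBE haB, haF⟩ (Set.singleton_subset_iff.2 ⟨hxE, hxF⟩)
  have hbxN : ({b, x} : Set α) ⊆ M.E \ F :=
    Set.insert_subset ⟨hBE hbB, hbF⟩ (Set.singleton_subset_iff.2 ⟨hxE, hxF⟩)
  have hNax : N.IsBase {a, x} := M.con_base_of_base hDF haxN (by rw [hDax]; exact hbase_ax)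
  have hNbx : N.IsBase {b, x} := M.con_base_of_base hDF hbxN (by rw [hDbx]; exact hbase_bx)
  -- rank of N
  have hrkN : N.rank = 2 := by
    rw [Matroid.rank_eq_ncard_base hNfin hNab, Set.ncard_pair hne]
  -- looplessness of N
  have hloop : ∀ e ∈ N.E, N.Indep {e} := by
    intro e he
    rw [hNE] at he
    obtain ⟨heE, heF⟩ := he
    have heD : e ∉ D := fun h => heF (M.subset_closure D hDind.subset_ground h)
    have hins : M.Indep (insert e D) := by
      rw [hDind.insert_indep_iff_of_notMem heD]
      exact ⟨heE, heF⟩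
    obtain ⟨Be, hBe, hBe_sub⟩ := hins.exists_isBase_superset
    have hDBe : D ⊆ Be := (Set.subset_insert e D).trans hBe_sub
    have hBeF : Be ∩ F = D := by
      apply subset_antisymm
      · rintro y ⟨hyBe, hyF⟩
        by_contra hyD
        have hins' : M.Indep (insert y D) := hBe.indep.subset (Set.insert_subset hyBe hDBe)
        rw [hDind.insert_indep_iff_of_notMem hyD] at hins'
        exact hins'.2 hyF
      · exact Set.subset_inter hDBe (M.subset_closure D hDind.subset_ground)
    have hDun : D ∪ (Be \ F) = Be := by
      apply subset_antisymm
      · exact Set.union_subset hDBe Set.diff_subset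
      · intro y hy
        by_cases hyF : y ∈ F
        · exact Or.inl (hBeF ▸ (⟨hy, hyF⟩ : y ∈ Be ∩ F))
        · exact Or.inr ⟨hy, hyF⟩
    have hNBe : N.IsBase (Be \ F) := M.con_base_of_base hDF
      (Set.diff_subset_diff_left hBe.subset_ground) (by rw [hDun]; exact hBe)
    exact hNBe.indep.subset (Set.singleton_subset_iff.2 ⟨hBe_sub (Set.mem_insert e D), heF⟩)
  -- the three points and their distinct closures
  have haN : a ∈ N.E := by rw [hNE]; exact ⟨hBE haB, haF⟩
  have hbN : b ∈ N.E := by rw [hNE]; exact ⟨hBE hbB, hbF⟩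
  have hxN : x ∈ N.E := by rw [hNE]; exact ⟨hxE, hxF⟩
  have hxa' : x ≠ a := fun h => hxB (h ▸ haB)
  have hxb' : x ≠ b := fun h => hxB (h ▸ hbB)
  have hclab : N.closure {a} ≠ N.closure {b} := by
    intro h
    have hbmem : b ∈ N.closure {a} := h ▸ N.mem_closure_self b hbN
    have hdep := ((hloop a haN).mem_closure_iff_of_notMem
      (by simpa using Ne.symm hne)).1 hbmem
    exact hdep.not_indep (Set.pair_comm a b ▸ hNab.indep)
  have hclax : N.closure {a} ≠ N.closure {x} := by
    intro h
    have hxmem : x ∈ N.closure {a} := h ▸ N.mem_closure_self x hxN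
    have hdep := ((hloop a haN).mem_closure_iff_of_notMem (by simpa using hxa')).1 hxmem
    exact hdep.not_indep (Set.pair_comm a x ▸ hNax.indep)
  have hclbx : N.closure {b} ≠ N.closure {x} := by
    intro h
    have hxmem : x ∈ N.closure {b} := h ▸ N.mem_closure_self x hxN
    have hdep := ((hloop b hbN).mem_closure_iff_of_notMem (by simpa using hxb')).1 hxmem
    exact hdep.not_indep (Set.pair_comm b x ▸ hNbx.indep)
  have hcontr := Matroid.charPoly_two_nonpos N hNfin hloop hrkN haN hbN hxN hclab hclax hclbx
  have hp := hpos F hFflat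
  rw [← hN] at hp
  linarith
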